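/- Let r > 0, let k, m be natural numbers with m ≥ 1, and for θ ∈ ℝ, x ∈ S^k ⊂ ℝ^{k+1}, y ∈ S^m ⊂ ℝ^{m+1} define ι(θ, x, y) = ((−r·sinθ·x, r·cosθ·y), (cosθ·x, sinθ·y)) ∈ ℝ^{k+m+2} × ℝ^{k+m+2}. Then: (i) writing ι(θ,x,y) = (p, q), we have ‖q‖ = 1, ⟨p, q⟩ = 0, and ‖p‖ = r; (ii) for θ, φ ∈ ℝ, x, u ∈ S^k, y, v ∈ S^m, one has ι(θ, x, y) = ι(φ, u, v) if and only if (cosφ, sinφ, u, v) = (cosθ, sinθ, x, y) or (cosφ, sinφ, u, v) = (−cosθ, −sinθ, −x, −y). -/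

import Mathlib

open scoped RealInnerProductSpace

section IotaAux

private lemma iota_sum_sq {n : ℕ} (x : EuclideanSpace ℝ (Fin n)) (hx : ‖x‖ = 1) :
    ∑ a, x a * x a = 1 := by
  have h := real_inner_self_eq_norm_sq x
  rw [hx, PiLp.inner_apply] at h
  simp only [RCLike.inner_apply, conj_trivial, one_pow] at h
  exact h

private lemma iota_abs_of_smul_eq {n : ℕ} {c d : ℝ} {x u : EuclideanSpace ℝ (Fin n)}
    (hx : ‖x‖ = 1) (hu : ‖u‖ = 1) (h : c • x = d • u) : |c| = |d| := by
  have := congrArg norm h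
  simpa [norm_smul, hx, hu] using this

private lemma iota_coef_cancel {n : ℕ} {c d : ℝ} {x : EuclideanSpace ℝ (Fin n)}
    (hx : ‖x‖ = 1) (h : c • x = d • x) : c = d := by
  have h0 : (c - d) • x = 0 := by rw [sub_smul, h, sub_self]
  rcases smul_eq_zero.mp h0 with h1 | h1
  · linarith
  · rw [h1] at hx; simp at hx

private lemma iota_neg_of_smul_eq {n : ℕ} {c : ℝ} (hc : c ≠ 0)
    {x u : EuclideanSpace ℝ (Fin n)} (h : c • x = (-c) • u) : u = -x := by
  have h1 : c • x = c • (-u) := by rw [h, neg_smul, smul_neg]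
  have h2 := smul_right_injective (EuclideanSpace ℝ (Fin n)) hc h1
  rw [h2]; simp

end IotaAux

/-- The two-to-one parametrization `ι` of the generalized Polterovich submanifold
`𝒫_{k,m}^r ⊂ T*S^{k+m+1}`: `ι(θ, x, y) = ((−r sinθ·x, r cosθ·y), (cosθ·x, sinθ·y))`,
where `ℝ^{k+m+2} = ℝ^{k+1} × ℝ^{m+1}` is modelled as the Euclidean space indexed by
`Fin (k+1) ⊕ Fin (m+1)`. -/
noncomputable def iota (k m : ℕ) (r θ : ℝ)
    (x : EuclideanSpace ℝ (Fin (k + 1))) (y : EuclideanSpace ℝ (Fin (m + 1))) :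
    EuclideanSpace ℝ (Fin (k + 1) ⊕ Fin (m + 1)) ×
      EuclideanSpace ℝ (Fin (k + 1) ⊕ Fin (m + 1)) :=
  (WithLp.toLp 2 (Sum.elim (fun a => -r * Real.sin θ * x a) (fun b => r * Real.cos θ * y b)),
   WithLp.toLp 2 (Sum.elim (fun a => Real.cos θ * x a) (fun b => Real.sin θ * y b)))

/-- Defining properties of the generalized Polterovich submanifolds: writing
`ι(θ,x,y) = (p,q)` one has `‖q‖ = 1`, `⟨p, q⟩ = 0`, `‖p‖ = r`; and
`ι(θ, x, y) = ι(φ, u, v)` iff `(cos φ, sin φ, u, v)` equals `(cos θ, sin θ, x, y)` or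
`(−cos θ, −sin θ, −x, −y)`. -/
theorem iota_properties (r : ℝ) (hr : 0 < r) (k m : ℕ) (hm : 1 ≤ m) :
    (∀ (θ : ℝ) (x : EuclideanSpace ℝ (Fin (k + 1))) (y : EuclideanSpace ℝ (Fin (m + 1))),
      ‖x‖ = 1 → ‖y‖ = 1 →
        ‖(iota k m r θ x y).2‖ = 1 ∧
        ⟪(iota k m r θ x y).1, (iota k m r θ x y).2⟫ = 0 ∧
        ‖(iota k m r θ x y).1‖ = r) ∧
    (∀ (θ φ : ℝ) (x u : EuclideanSpace ℝ (Fin (k + 1)))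
        (y v : EuclideanSpace ℝ (Fin (m + 1))),
      ‖x‖ = 1 → ‖y‖ = 1 → ‖u‖ = 1 → ‖v‖ = 1 →
        (iota k m r θ x y = iota k m r φ u v ↔
          (Real.cos φ = Real.cos θ ∧ Real.sin φ = Real.sin θ ∧ u = x ∧ v = y) ∨
          (Real.cos φ = -Real.cos θ ∧ Real.sin φ = -Real.sin θ ∧ u = -x ∧ v = -y))) := by
  constructor
  · intro θ x y hx hy
    have hq : ⟪(iota k m r θ x y).2, (iota k m r θ x y).2⟫ = 1 := by
      simp only [iota, PiLp.inner_apply, RCLike.inner_apply, conj_trivial,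
        Fintype.sum_sum_type, Sum.elim_inl, Sum.elim_inr]
      have h1 : ∑ a, Real.cos θ * x a * (Real.cos θ * x a)
          = Real.cos θ ^ 2 * ∑ a, x a * x a := by
        rw [Finset.mul_sum]; exact Finset.sum_congr rfl fun a _ => by ring
      have h2 : ∑ b, Real.sin θ * y b * (Real.sin θ * y b)
          = Real.sin θ ^ 2 * ∑ b, y b * y b := by
        rw [Finset.mul_sum]; exact Finset.sum_congr rfl fun b _ => by ring
      rw [h1, h2, iota_sum_sq x hx, iota_sum_sq y hy, mul_one, mul_one]
      exact Real.cos_sq_add_sin_sq θ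
    have hp : ⟪(iota k m r θ x y).1, (iota k m r θ x y).1⟫ = r ^ 2 := by
      simp only [iota, PiLp.inner_apply, RCLike.inner_apply, conj_trivial,
        Fintype.sum_sum_type, Sum.elim_inl, Sum.elim_inr]
      have h1 : ∑ a, -r * Real.sin θ * x a * (-r * Real.sin θ * x a)
          = r ^ 2 * Real.sin θ ^ 2 * ∑ a, x a * x a := by
        rw [Finset.mul_sum]; exact Finset.sum_congr rfl fun a _ => by ring
      have h2 : ∑ b, r * Real.cos θ * y b * (r * Real.cos θ * y b)
          = r ^ 2 * Real.cos θ ^ 2 * ∑ b, y b * y b := by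
        rw [Finset.mul_sum]; exact Finset.sum_congr rfl fun b _ => by ring
      rw [h1, h2, iota_sum_sq x hx, iota_sum_sq y hy, mul_one, mul_one]
      nlinarith [Real.sin_sq_add_cos_sq θ]
    refine ⟨?_, ?_, ?_⟩
    · have := real_inner_self_eq_norm_sq (iota k m r θ x y).2
      rw [hq] at this
      nlinarith [norm_nonneg (iota k m r θ x y).2]
    · simp only [iota, PiLp.inner_apply, RCLike.inner_apply, conj_trivial,
        Fintype.sum_sum_type, Sum.elim_inl, Sum.elim_inr]
      have h1 : ∑ a, Real.cos θ * x a * (-r * Real.sin θ * x a)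
          = -r * Real.sin θ * Real.cos θ * ∑ a, x a * x a := by
        rw [Finset.mul_sum]; exact Finset.sum_congr rfl fun a _ => by ring
      have h2 : ∑ b, Real.sin θ * y b * (r * Real.cos θ * y b)
          = r * Real.cos θ * Real.sin θ * ∑ b, y b * y b := by
        rw [Finset.mul_sum]; exact Finset.sum_congr rfl fun b _ => by ring
      rw [h1, h2, iota_sum_sq x hx, iota_sum_sq y hy]; ring
    · have := real_inner_self_eq_norm_sq (iota k m r θ x y).1
      rw [hp] at this
      nlinarith [norm_nonneg (iota k m r θ x y).1]
  · intro θ φ x u y v hx hy hu hv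
    constructor
    · intro h
      have hA : Real.sin θ • x = Real.sin φ • u := by
        ext a
        have h1 := congrFun (congrArg (fun p => WithLp.ofLp p.1) h) (Sum.inl a)
        simp only [iota, WithLp.ofLp_toLp, Sum.elim_inl] at h1
        show Real.sin θ * x a = Real.sin φ * u a
        exact mul_left_cancel₀ (neg_ne_zero.mpr hr.ne') (by linear_combination h1)
      have hB : Real.cos θ • y = Real.cos φ • v := by
        ext b
        have h1 := congrFun (congrArg (fun p => WithLp.ofLp p.1) h) (Sum.inr b)
        simp only [iota, WithLp.ofLp_toLp, Sum.elim_inr] at h1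
        show Real.cos θ * y b = Real.cos φ * v b
        exact mul_left_cancel₀ hr.ne' (by linear_combination h1)
      have hC : Real.cos θ • x = Real.cos φ • u := by
        ext a
        exact congrFun (congrArg (fun p => WithLp.ofLp p.2) h) (Sum.inl a)
      have hD : Real.sin θ • y = Real.sin φ • v := by
        ext b
        exact congrFun (congrArg (fun p => WithLp.ofLp p.2) h) (Sum.inr b)
      by_cases hc : Real.cos θ = 0
      · have hcφ : Real.cos φ = 0 := by
          have := iota_abs_of_smul_eq hx hu hC
          rw [hc, abs_zero] at this
          exact abs_eq_zero.mp this.symm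
        have hs : Real.sin θ ≠ 0 := by
          intro h0
          have := Real.sin_sq_add_cos_sq θ
          rw [h0, hc] at this; norm_num at this
        have habs : |Real.sin θ| = |Real.sin φ| := iota_abs_of_smul_eq hx hu hA
        rcases abs_eq_abs.mp habs with hsφ | hsφ
        · left
          refine ⟨by rw [hcφ, hc], hsφ.symm, ?_, ?_⟩
          · exact (smul_right_injective _ hs (hsφ ▸ hA)).symm
          · exact (smul_right_injective _ hs (hsφ ▸ hD)).symm
        · right
          have hsφ' : Real.sin φ = -Real.sin θ := by linarith
          refine ⟨by rw [hcφ, hc, neg_zero], hsφ', ?_, ?_⟩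
          · refine iota_neg_of_smul_eq hs ?_
            rw [hA, hsφ']
          · refine iota_neg_of_smul_eq hs ?_
            rw [hD, hsφ']
      · have habs : |Real.cos θ| = |Real.cos φ| := iota_abs_of_smul_eq hx hu hC
        rcases abs_eq_abs.mp habs with hcφ | hcφ
        · left
          have hux : x = u := smul_right_injective _ hc (hcφ ▸ hC)
          have hvy : y = v := smul_right_injective _ hc (hcφ ▸ hB)
          subst hux; subst hvy
          have hsφ : Real.sin θ = Real.sin φ := iota_coef_cancel hx hA
          exact ⟨hcφ.symm, hsφ.symm, rfl, rfl⟩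
        · right
          have hcφ' : Real.cos φ = -Real.cos θ := by linarith
          have hu' : u = -x := by
            refine iota_neg_of_smul_eq hc ?_
            rw [hC, hcφ']
          have hv' : v = -y := by
            refine iota_neg_of_smul_eq hc ?_
            rw [hB, hcφ']
          have hsφ : Real.sin φ = -Real.sin θ := by
            have h1 : Real.sin θ • x = (-Real.sin φ) • x := by
              rw [hA, hu', smul_neg, neg_smul]
            have := iota_coef_cancel hx h1
            linarith
          exact ⟨hcφ', hsφ, hu', hv'⟩
    · rintro (⟨hc, hs, rfl, rfl⟩ | ⟨hc, hs, rfl, rfl⟩)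
      · simp only [iota, hc, hs]
      · simp only [iota, hc, hs, Prod.mk.injEq]
        constructor <;> ext i <;> rcases i with a | b <;>
          simp [PiLp.neg_apply] <;> ring
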